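/- Consider the model f(y,x,e) = μ(y,x) + σ(x)e + ℓ(x) on E = ℝ^k, where: μ : ℝ^k × F → ℝ^k is measurable and satisfies |μ(y₁,x) − μ(y₂,x)| ≤ ρ|y₁−y₂| + R for all x ∈ F, y₁,y₂ ∈ ℝ^k, with ρ ∈ (0,1), R > 0; σ : F → ℝ^{k×k} is measurable with σ(x) invertible for every x ∈ F; ℓ : F → ℝ^k is measurable; and ε₀ is an ℝ^k-valued random variable whose law has a density g with respect to Lebesgue measure which is bounded away from 0 on compact sets (for every compact C ⊆ ℝ^k there is κ > 0 with g ≥ κ on C). For x ∈ F and y₁,y₂ ∈ ℝ^k let ν(x,y₁,y₂) be the uniform probability measure on the closed unit ball centered at (μ(y₁,x) + μ(y₂,x))/2 + ℓ(x). Then there exists a function η : F → (0,1] such that for every x ∈ F, every y₁,y₂ ∈ ℝ^k with 0 < |y₁−y₂| ≤ 2R/(1−ρ), every Borel set A ⊆ ℝ^k and i = 1,2: ℙ(μ(y_i,x) + σ(x)ε₀ + ℓ(x) ∈ A) ≥ η(x)·ν(x,y₁,y₂)(A). -/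

import Mathlib

open MeasureTheory

/-- The uniform probability measure on the closed ball of radius `r` around `c`. -/
noncomputable def uniformBall {k : ℕ} (c : EuclideanSpace ℝ (Fin k)) (r : ℝ) :
    Measure (EuclideanSpace ℝ (Fin k)) :=
  (volume (Metric.closedBall c r))⁻¹ • volume.restrict (Metric.closedBall c r)

/-- Matrix–vector multiplication on Euclidean space. -/
noncomputable def matVec {k : ℕ} (M : Matrix (Fin k) (Fin k) ℝ)
    (v : EuclideanSpace ℝ (Fin k)) : EuclideanSpace ℝ (Fin k) :=
  (EuclideanSpace.equiv (Fin k) ℝ).symm (M.mulVec (EuclideanSpace.equiv (Fin k) ℝ v))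

/-- `matVec` as a linear map. -/
noncomputable def matVecLin {k : ℕ} (M : Matrix (Fin k) (Fin k) ℝ) :
    EuclideanSpace ℝ (Fin k) →ₗ[ℝ] EuclideanSpace ℝ (Fin k) :=
  ((EuclideanSpace.equiv (Fin k) ℝ).symm.toLinearEquiv.toLinearMap).comp
    ((Matrix.toLin' M).comp (EuclideanSpace.equiv (Fin k) ℝ).toLinearEquiv.toLinearMap)

theorem matVecLin_apply {k : ℕ} (M : Matrix (Fin k) (Fin k) ℝ) (v : EuclideanSpace ℝ (Fin k)) :
    matVecLin M v = matVec M v := rfl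

theorem matVecLin_det {k : ℕ} (M : Matrix (Fin k) (Fin k) ℝ) : (matVecLin M).det = M.det := by
  have h := LinearMap.det_conj (Matrix.toLin' M) (EuclideanSpace.equiv (Fin k) ℝ).symm.toLinearEquiv
  rw [← LinearMap.det_toLin' M, ← h]
  rfl

/-- `matVec` as a continuous linear map. -/
noncomputable def matVecCLM {k : ℕ} (M : Matrix (Fin k) (Fin k) ℝ) :
    EuclideanSpace ℝ (Fin k) →L[ℝ] EuclideanSpace ℝ (Fin k) :=
  (matVecLin M).toContinuousLinearMap

theorem matVecInv_matVec {k : ℕ} {M : Matrix (Fin k) (Fin k) ℝ} (h : IsUnit M)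
    (v : EuclideanSpace ℝ (Fin k)) : matVecLin M⁻¹ (matVecLin M v) = v := by
  show (EuclideanSpace.equiv (Fin k) ℝ).symm (M⁻¹.mulVec ((EuclideanSpace.equiv (Fin k) ℝ)
    ((EuclideanSpace.equiv (Fin k) ℝ).symm (M.mulVec ((EuclideanSpace.equiv (Fin k) ℝ) v))))) = v
  simp [PiLp.coe_continuousLinearEquiv, Matrix.mulVec_mulVec, Matrix.nonsing_inv_mul M ((Matrix.isUnit_iff_isUnit_det M).mp h)]

theorem stmt_8 {k : ℕ} (hk : 1 ≤ k) {F : Type*} [MeasurableSpace F]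
    {Ω : Type*} [MeasurableSpace Ω] (P : Measure Ω) [IsProbabilityMeasure P]
    (μ : EuclideanSpace ℝ (Fin k) → F → EuclideanSpace ℝ (Fin k))
    (hμmeas : Measurable fun p : EuclideanSpace ℝ (Fin k) × F => μ p.1 p.2)
    (ρ R : ℝ) (hρ : ρ ∈ Set.Ioo (0:ℝ) 1) (hR : 0 < R)
    (hμ : ∀ (x : F) (y₁ y₂ : EuclideanSpace ℝ (Fin k)),
      ‖μ y₁ x - μ y₂ x‖ ≤ ρ * ‖y₁ - y₂‖ + R)
    (σ : F → Matrix (Fin k) (Fin k) ℝ) (hσmeas : ∀ i j, Measurable fun x => σ x i j)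
    (hσinv : ∀ x, IsUnit (σ x))
    (ℓ : F → EuclideanSpace ℝ (Fin k)) (hℓ : Measurable ℓ)
    (ε : Ω → EuclideanSpace ℝ (Fin k)) (hε : Measurable ε)
    (g : EuclideanSpace ℝ (Fin k) → ℝ) (hgmeas : Measurable g) (hg0 : ∀ u, 0 ≤ g u)
    (hlaw : Measure.map ε P = volume.withDensity fun u => ENNReal.ofReal (g u))
    (hgpos : ∀ C : Set (EuclideanSpace ℝ (Fin k)), IsCompact C →
      ∃ κ > (0:ℝ), ∀ u ∈ C, κ ≤ g u) :
    ∃ η : F → ℝ, (∀ x, η x ∈ Set.Ioc (0:ℝ) 1) ∧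
      ∀ (x : F) (y₁ y₂ : EuclideanSpace ℝ (Fin k)),
        0 < ‖y₁ - y₂‖ → ‖y₁ - y₂‖ ≤ 2 * R / (1 - ρ) →
        ∀ A : Set (EuclideanSpace ℝ (Fin k)), MeasurableSet A →
          ENNReal.ofReal (η x)
              * uniformBall (((1:ℝ)/2) • (μ y₁ x + μ y₂ x) + ℓ x) 1 A
            ≤ P {ω | μ y₁ x + matVec (σ x) (ε ω) + ℓ x ∈ A} ∧
          ENNReal.ofReal (η x)
              * uniformBall (((1:ℝ)/2) • (μ y₁ x + μ y₂ x) + ℓ x) 1 A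
            ≤ P {ω | μ y₂ x + matVec (σ x) (ε ω) + ℓ x ∈ A} := by
  classical
  obtain ⟨hρ0, hρ1⟩ := hρ
  have h1ρ : 0 < 1 - ρ := by linarith
  set D : ℝ := 2 * R / (1 - ρ) with hD
  have hDpos : 0 < D := by positivity
  set s₂ : ℝ := (ρ * D + R) / 2 with hs₂
  have hs₂pos : 0 < s₂ := by positivity
  set r₀ : ℝ := 1 + s₂ with hr₀
  have hr₀pos : 0 < r₀ := by positivity
  -- per-x lower bound on g
  have hK : ∀ x : F, ∃ κ > (0:ℝ),
      ∀ u ∈ Metric.closedBall (0:EuclideanSpace ℝ (Fin k)) (‖matVecCLM (σ x)⁻¹‖ * r₀), κ ≤ g u :=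
    fun x => hgpos (Metric.closedBall (0:EuclideanSpace ℝ (Fin k)) (‖matVecCLM (σ x)⁻¹‖ * r₀))
      (isCompact_closedBall _ _)
  choose κ hκpos hκ using hK
  -- volume of the unit ball
  have hVBpos : 0 < volume (Metric.closedBall (0:EuclideanSpace ℝ (Fin k)) 1) :=
    Metric.measure_closedBall_pos _ _ one_pos
  have hVBfin : volume (Metric.closedBall (0:EuclideanSpace ℝ (Fin k)) 1) ≠ ⊤ :=
    measure_closedBall_lt_top.ne
  set vb : ℝ := (volume (Metric.closedBall (0:EuclideanSpace ℝ (Fin k)) 1)).toReal with hvbdef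
  have hvb : 0 < vb := ENNReal.toReal_pos hVBpos.ne' hVBfin
  have hvbeq : ENNReal.ofReal vb = volume (Metric.closedBall (0:EuclideanSpace ℝ (Fin k)) 1) :=
    ENNReal.ofReal_toReal hVBfin
  -- determinant factor
  set d : F → ℝ := fun x => |((σ x).det)⁻¹| with hddef
  have hdet : ∀ x, (σ x).det ≠ 0 := fun x =>
    ((Matrix.isUnit_iff_isUnit_det (σ x)).mp (hσinv x)).ne_zero
  have hd : ∀ x, 0 < d x := fun x => abs_pos.mpr (inv_ne_zero (hdet x))
  refine ⟨fun x => min 1 (κ x * d x * vb), fun x =>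
    ⟨lt_min one_pos (by have := hκpos x; have := hd x; positivity), min_le_left _ _⟩, ?_⟩
  intro x y₁ y₂ hy0 hyD A hA
  set c : EuclideanSpace ℝ (Fin k) := ((1:ℝ)/2) • (μ y₁ x + μ y₂ x) + ℓ x with hc
  set B : Set (EuclideanSpace ℝ (Fin k)) := Metric.closedBall c 1 with hB
  have hVB : volume B = volume (Metric.closedBall (0:EuclideanSpace ℝ (Fin k)) 1) :=
    Measure.addHaar_closedBall_center volume c 1
  have key : ∀ b : EuclideanSpace ℝ (Fin k), ‖b - ((1:ℝ)/2) • (μ y₁ x + μ y₂ x)‖ ≤ s₂ →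
      ENNReal.ofReal (min 1 (κ x * d x * vb)) * uniformBall c 1 A
        ≤ P {ω | b + matVec (σ x) (ε ω) + ℓ x ∈ A} := by
    intro b hb
    have hdetL : (matVecLin (σ x)).det = (σ x).det := matVecLin_det _
    have hdet0 : (matVecLin (σ x)).det ≠ 0 := by rw [hdetL]; exact hdet x
    -- preimage description
    have hTset : ∀ s : Set (EuclideanSpace ℝ (Fin k)), {u : EuclideanSpace ℝ (Fin k) | b + matVec (σ x) u + ℓ x ∈ s} =
        (matVecLin (σ x)) ⁻¹' ((fun z => (b + ℓ x) + z) ⁻¹' s) := by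
      intro s
      ext u
      simp only [Set.mem_setOf_eq, Set.mem_preimage, matVecLin_apply]
      have : b + matVec (σ x) u + ℓ x = b + ℓ x + matVec (σ x) u := by abel
      rw [this]
    have hvolT : ∀ s : Set (EuclideanSpace ℝ (Fin k)), volume {u : EuclideanSpace ℝ (Fin k) | b + matVec (σ x) u + ℓ x ∈ s}
        = ENNReal.ofReal (d x) * volume s := by
      intro s
      rw [hTset, Measure.addHaar_preimage_linearMap volume hdet0,
        measure_preimage_add, hdetL]
    have hTmeas : Measurable fun u : EuclideanSpace ℝ (Fin k) => b + matVec (σ x) u + ℓ x := by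
      have hcont : Continuous fun u : EuclideanSpace ℝ (Fin k) => matVec (σ x) u := (matVecCLM (σ x)).continuous
      exact ((measurable_const.add hcont.measurable).add measurable_const)
    have hSA : MeasurableSet {u : EuclideanSpace ℝ (Fin k) | b + matVec (σ x) u + ℓ x ∈ A} := hTmeas hA
    have hP : P {ω | b + matVec (σ x) (ε ω) + ℓ x ∈ A}
        = ∫⁻ u in {u : EuclideanSpace ℝ (Fin k) | b + matVec (σ x) u + ℓ x ∈ A}, ENNReal.ofReal (g u) := by
      have hpre : {ω | b + matVec (σ x) (ε ω) + ℓ x ∈ A}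
          = ε ⁻¹' {u : EuclideanSpace ℝ (Fin k) | b + matVec (σ x) u + ℓ x ∈ A} := rfl
      rw [hpre, ← Measure.map_apply hε hSA, hlaw, withDensity_apply _ hSA]
    -- the localized preimage sits in the compact set where g ≥ κ x
    have hsub : {u : EuclideanSpace ℝ (Fin k) | b + matVec (σ x) u + ℓ x ∈ A ∩ B}
        ⊆ Metric.closedBall (0:EuclideanSpace ℝ (Fin k)) (‖matVecCLM (σ x)⁻¹‖ * r₀) := by
      intro u hu
      have hu2 : b + matVec (σ x) u + ℓ x ∈ B := hu.2
      rw [hB, Metric.mem_closedBall, dist_eq_norm] at hu2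
      have h1 : ‖matVecLin (σ x) u‖ ≤ r₀ := by
        have heq : matVecLin (σ x) u = (b + matVec (σ x) u + ℓ x - c)
            - (b - ((1:ℝ)/2) • (μ y₁ x + μ y₂ x)) := by
          rw [matVecLin_apply, hc]; abel
        calc ‖matVecLin (σ x) u‖
            ≤ ‖b + matVec (σ x) u + ℓ x - c‖ + ‖b - ((1:ℝ)/2) • (μ y₁ x + μ y₂ x)‖ := by
              rw [heq]; exact norm_sub_le _ _
          _ ≤ 1 + s₂ := add_le_add hu2 hb
      have h2 : u = matVecCLM ((σ x)⁻¹) (matVecLin (σ x) u) :=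
        (matVecInv_matVec (hσinv x) u).symm
      rw [Metric.mem_closedBall, dist_zero_right]
      calc ‖u‖ = ‖matVecCLM ((σ x)⁻¹) (matVecLin (σ x) u)‖ := by rw [← h2]
        _ ≤ ‖matVecCLM (σ x)⁻¹‖ * ‖matVecLin (σ x) u‖ := (matVecCLM _).le_opNorm _
        _ ≤ ‖matVecCLM (σ x)⁻¹‖ * r₀ :=
            mul_le_mul_of_nonneg_left h1 (norm_nonneg _)
    have hSAB : MeasurableSet {u : EuclideanSpace ℝ (Fin k) | b + matVec (σ x) u + ℓ x ∈ A ∩ B} :=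
      hTmeas (hA.inter Metric.isClosed_closedBall.measurableSet)
    have hdvol : volume B ≠ 0 := by rw [hVB]; exact hVBpos.ne'
    have hdfin : volume B ≠ ⊤ := by rw [hVB]; exact hVBfin
    calc ENNReal.ofReal (min 1 (κ x * d x * vb)) * uniformBall c 1 A
        ≤ ENNReal.ofReal (κ x * d x * vb) * ((volume B)⁻¹ * volume (A ∩ B)) := by
          rw [uniformBall]
          refine mul_le_mul' (ENNReal.ofReal_le_ofReal (min_le_right _ _)) ?_
          rw [Measure.smul_apply, Measure.restrict_apply hA, smul_eq_mul]
      _ = ENNReal.ofReal (κ x * d x) * volume (A ∩ B) := by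
          rw [ENNReal.ofReal_mul (by have := (hκpos x).le; have := (hd x).le; positivity),
            hvbeq, ← hVB, mul_assoc, ← mul_assoc (volume B),
            ENNReal.mul_inv_cancel hdvol hdfin, one_mul]
      _ = ENNReal.ofReal (κ x) * volume {u : EuclideanSpace ℝ (Fin k) | b + matVec (σ x) u + ℓ x ∈ A ∩ B} := by
          rw [hvolT (A ∩ B), ENNReal.ofReal_mul (hκpos x).le, mul_assoc]
      _ = ∫⁻ _ in {u : EuclideanSpace ℝ (Fin k) | b + matVec (σ x) u + ℓ x ∈ A ∩ B}, ENNReal.ofReal (κ x) := by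
          rw [setLIntegral_const]
      _ ≤ ∫⁻ u in {u : EuclideanSpace ℝ (Fin k) | b + matVec (σ x) u + ℓ x ∈ A ∩ B}, ENNReal.ofReal (g u) :=
          setLIntegral_mono hgmeas.ennreal_ofReal
            (fun u hu => ENNReal.ofReal_le_ofReal (hκ x u (hsub hu)))
      _ ≤ ∫⁻ u in {u : EuclideanSpace ℝ (Fin k) | b + matVec (σ x) u + ℓ x ∈ A}, ENNReal.ofReal (g u) :=
          lintegral_mono_set (fun u hu => hu.1)
      _ = P {ω | b + matVec (σ x) (ε ω) + ℓ x ∈ A} := hP.symm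
  -- distance from each μ yᵢ x to the midpoint
  have h12 : ‖μ y₁ x - μ y₂ x‖ ≤ ρ * D + R := by
    calc ‖μ y₁ x - μ y₂ x‖ ≤ ρ * ‖y₁ - y₂‖ + R := hμ x y₁ y₂
      _ ≤ ρ * D + R := by nlinarith
  have hb1 : ‖μ y₁ x - ((1:ℝ)/2) • (μ y₁ x + μ y₂ x)‖ ≤ s₂ := by
    have heq : μ y₁ x - ((1:ℝ)/2) • (μ y₁ x + μ y₂ x)
        = ((1:ℝ)/2) • (μ y₁ x - μ y₂ x) := by module
    rw [heq, norm_smul]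
    rw [hs₂]
    have : ‖(1:ℝ)/2‖ = 1/2 := by norm_num [Real.norm_eq_abs]
    rw [this]
    linarith
  have hb2 : ‖μ y₂ x - ((1:ℝ)/2) • (μ y₁ x + μ y₂ x)‖ ≤ s₂ := by
    have heq : μ y₂ x - ((1:ℝ)/2) • (μ y₁ x + μ y₂ x)
        = ((1:ℝ)/2) • (μ y₂ x - μ y₁ x) := by module
    rw [heq, norm_smul]
    have h21 : ‖μ y₂ x - μ y₁ x‖ = ‖μ y₁ x - μ y₂ x‖ := norm_sub_rev _ _
    rw [hs₂, h21]
    have : ‖(1:ℝ)/2‖ = 1/2 := by norm_num [Real.norm_eq_abs]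
    rw [this]
    linarith
  exact ⟨key (μ y₁ x) hb1, key (μ y₂ x) hb2⟩
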